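/- Let A, B ∈ ℂ^{N×N} be Hermitian positive definite matrices and T > 0, σ² > 0. Define F = (2T/σ²) [Re(A ⊗ B), -Im(A ⊗ B); Im(A ⊗ B), Re(A ⊗ B)] ∈ ℝ^{2N²×2N²}. Then F is invertible and tr(F^{-1}) = (σ²/T) tr(A^{-1}) tr(B^{-1}). -/
import Mathlib

open Matrix ComplexOrder
open scoped Kronecker

variable {n : Type*} [Fintype n] [DecidableEq n]

noncomputable def realify (M : Matrix n n ℂ) : Matrix (n ⊕ n) (n ⊕ n) ℝ :=
  Matrix.fromBlocks (M.map Complex.re) (-(M.map Complex.im))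
    (M.map Complex.im) (M.map Complex.re)

lemma realify_one : realify (1 : Matrix n n ℂ) = 1 := by
  have h1 : (1 : Matrix n n ℂ).map Complex.re = 1 := by
    ext i j; by_cases h : i = j <;> simp [Matrix.one_apply, h]
  have h2 : (1 : Matrix n n ℂ).map Complex.im = 0 := by
    ext i j; by_cases h : i = j <;> simp [Matrix.one_apply, h]
  simp [realify, h1, h2, Matrix.fromBlocks_one]

lemma realify_mul (M P : Matrix n n ℂ) :
    realify (M * P) = realify M * realify P := by
  rw [realify, realify, realify, Matrix.fromBlocks_multiply]
  ext i j
  rcases i with i | i <;> rcases j with j | j <;>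
    simp [Matrix.mul_apply, Complex.mul_re, Complex.mul_im, Finset.sum_sub_distrib,
      Finset.sum_add_distrib, add_comm, sub_eq_neg_add]

lemma trace_realify (M : Matrix n n ℂ) :
    Matrix.trace (realify M) = 2 * (Matrix.trace M).re := by
  simp only [realify, Matrix.trace, Matrix.diag, Fintype.sum_sum_type,
    Matrix.fromBlocks_apply₁₁, Matrix.fromBlocks_apply₂₂, Matrix.map_apply, Complex.re_sum]
  ring

theorem stmt_5 {N : ℕ} (A B : Matrix (Fin N) (Fin N) ℂ)
    (hA : A.PosDef) (hB : B.PosDef) (T σsq : ℝ) (hT : 0 < T) (hσ : 0 < σsq) :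
    let AB := A ⊗ₖ B
    let F : Matrix ((Fin N × Fin N) ⊕ (Fin N × Fin N))
        ((Fin N × Fin N) ⊕ (Fin N × Fin N)) ℝ :=
      (2 * T / σsq) •
        Matrix.fromBlocks (AB.map Complex.re) (-(AB.map Complex.im))
          (AB.map Complex.im) (AB.map Complex.re)
    IsUnit F ∧
      Matrix.trace F⁻¹ = (σsq / T) * (Matrix.trace A⁻¹).re * (Matrix.trace B⁻¹).re := by
  intro AB F
  have hFdef : F = (2 * T / σsq) • realify AB := rfl
  have hc : (2 * T / σsq) ≠ 0 := by positivity
  have hABunit : IsUnit AB.det := by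
    rw [Matrix.det_kronecker]
    exact ((isUnit_iff_ne_zero.mpr hA.det_pos.ne').pow _).mul
      ((isUnit_iff_ne_zero.mpr hB.det_pos.ne').pow _)
  have hmul : AB * AB⁻¹ = 1 := Matrix.mul_nonsing_inv _ hABunit
  have hmul' : AB⁻¹ * AB = 1 := Matrix.nonsing_inv_mul _ hABunit
  have hG : F * ((σsq / (2 * T)) • realify AB⁻¹) = 1 := by
    rw [hFdef, Matrix.smul_mul, Matrix.mul_smul, smul_smul, ← realify_mul, hmul,
      realify_one]
    rw [div_mul_div_comm]
    rw [mul_comm σsq (2*T), div_self (by positivity), one_smul]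
  have hG' : ((σsq / (2 * T)) • realify AB⁻¹) * F = 1 := by
    rw [hFdef, Matrix.smul_mul, Matrix.mul_smul, smul_smul, ← realify_mul, hmul',
      realify_one]
    rw [div_mul_div_comm]
    rw [mul_comm σsq (2*T), div_self (by positivity), one_smul]
  refine ⟨Matrix.isUnit_iff_isUnit_det _ |>.mpr (Matrix.isUnit_det_of_right_inverse hG), ?_⟩
  have hFinv : F⁻¹ = (σsq / (2 * T)) • realify AB⁻¹ := Matrix.inv_eq_right_inv hG
  rw [hFinv, Matrix.trace_smul, trace_realify]
  have hABinv : AB⁻¹ = A⁻¹ ⊗ₖ B⁻¹ := Matrix.inv_kronecker A B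
  rw [hABinv, Matrix.trace_kronecker]
  have him : ∀ (M : Matrix (Fin N) (Fin N) ℂ), M.PosDef → (Matrix.trace M⁻¹).im = 0 := by
    intro M hM
    have h := hM.posSemidef.inv.isHermitian
    have : star (Matrix.trace M⁻¹) = Matrix.trace M⁻¹ := by
      rw [← Matrix.trace_conjTranspose, h.eq]
    have h2 := congrArg Complex.im this
    simp [Complex.star_def] at h2
    linarith
  rw [Complex.mul_re, him A hA, him B hB]
  simp
  ring
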